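/- For every plane partition π with Φ(π) = (d_{iℓ}) and every ℓ ≥ 1, the number c_ℓ(π) of columns of π containing the entry ℓ equals the ℓ-th column sum ∑_i d_{iℓ} of Φ(π). -/
import Mathlib


open scoped BigOperators

/-- A plane partition: a matrix of naturals (0-indexed) with weakly decreasing rows and
columns and finitely many nonzero entries. -/
structure PlanePartition where
  entry : ℕ → ℕ → ℕ
  row_decr : ∀ i j, entry i (j + 1) ≤ entry i j
  col_decr : ∀ i j, entry (i + 1) j ≤ entry i j
  finite_support : {p : ℕ × ℕ | entry p.1 p.2 ≠ 0}.Finite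

namespace PlanePartition

/-- `π` has at most `b` (nonzero) rows. -/
def rowsLE (π : PlanePartition) (b : ℕ) : Prop := ∀ i j, b ≤ i → π.entry i j = 0

/-- `π` has at most `a` (nonzero) columns. -/
def colsLE (π : PlanePartition) (a : ℕ) : Prop := ∀ i j, a ≤ j → π.entry i j = 0

/-- all entries of `π` are at most `c`. -/
def entriesLE (π : PlanePartition) (c : ℕ) : Prop := ∀ i j, π.entry i j ≤ c

/-- the number of columns of `π` containing the entry `ℓ`. -/
noncomputable def cCol (π : PlanePartition) (ℓ : ℕ) : ℕ :=
  {j | ∃ i, π.entry i j = ℓ}.ncard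

/-- the length of the `i`-th row of `π` (0-indexed); this is the `(i+1)`-st part of
the shape of `π`. -/
noncomputable def rowLen (π : PlanePartition) (i : ℕ) : ℕ :=
  {j | 0 < π.entry i j}.ncard

/-- `d_{iℓ} = #{j : π_{ij} = ℓ > π_{i+1,j}}`; the row index `i` is 0-indexed
while `ℓ` denotes the actual value. -/
noncomputable def phi (π : PlanePartition) (i ℓ : ℕ) : ℕ :=
  {j | π.entry i j = ℓ ∧ π.entry (i + 1) j < ℓ}.ncard

/-- `Φ(π)` as a 0-indexed matrix: entry `(i, l)` counts `j` with `π_{ij} = l+1 > π_{i+1,j}`. -/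
noncomputable def phiMatrix (π : PlanePartition) : ℕ → ℕ → ℕ :=
  fun i l => π.phi i (l + 1)

/-- `π` has shape `μ`. -/
def hasShape (π : PlanePartition) (μ : YoungDiagram) : Prop :=
  ∀ i j, 0 < π.entry i j ↔ (i, j) ∈ μ

/-- the descent set of `π` (0-indexed positions). -/
def des (π : PlanePartition) : Set (ℕ × ℕ) :=
  {p | π.entry (p.1 + 1) p.2 < π.entry p.1 p.2}

end PlanePartition

/-- the set of plane partitions with at most `a` columns, at most `b` rows
and entries at most `c`. -/
def PP (a b c : ℕ) : Set PlanePartition :=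
  {π | π.colsLE a ∧ π.rowsLE b ∧ π.entriesLE c}

/-- `PP(∞, b, c)`: plane partitions with at most `b` rows and entries at most `c`. -/
def PPinf (b c : ℕ) : Set PlanePartition :=
  {π | π.rowsLE b ∧ π.entriesLE c}

/-- a monotone lattice path (as a list of points) from `s` to `t`. -/
def IsMonPath (L : List (ℕ × ℕ)) (s t : ℕ × ℕ) : Prop :=
  L.head? = some s ∧ L.getLast? = some t ∧
    L.Chain' fun p q => q = (p.1 + 1, p.2) ∨ q = (p.1, p.2 + 1)

/-- the last passage time: the maximal weight of a monotone path from `s` to `t`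
in the matrix `d`. -/
noncomputable def lastPassage (d : ℕ → ℕ → ℕ) (s t : ℕ × ℕ) : ℕ :=
  sSup {n | ∃ L, IsMonPath L s t ∧ n = (L.map fun p => d p.1 p.2).sum}

/-- `b×c` matrices of naturals (as functions vanishing off `[0,b) × [0,c)`) whose
last passage time `G(b,c)` is at most `a`. -/
def BM (a b c : ℕ) : Set (ℕ → ℕ → ℕ) :=
  {d | (∀ i j, b ≤ i → d i j = 0) ∧ (∀ i j, c ≤ j → d i j = 0) ∧
    lastPassage d (0, 0) (b - 1, c - 1) ≤ a}

/-- the rectangular Young diagram of the partition `(a^b)` (with `b` rows of length `a`). -/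
def rectDiagram (a b : ℕ) : YoungDiagram where
  cells := Finset.range b ×ˢ Finset.range a
  isLowerSet := by
    intro p q hle hp
    simp only [Finset.coe_product, Set.mem_prod, Finset.mem_coe, Finset.mem_range] at hp ⊢
    exact ⟨lt_of_le_of_lt hle.1 hp.1, lt_of_le_of_lt hle.2 hp.2⟩

/-- the variables `(1^b, x_1, x_2, …)`: the first `b` variables are specialized to `1`. -/
def oneExtend (b : ℕ) (x : ℕ → ℝ) : ℕ → ℝ :=
  fun i => if i < b then 1 else x (i - b)

/-- the Schur polynomial `s_μ(x_1, …, x_N)` evaluated at real arguments;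
variables are 0-indexed (`x ℓ` is the variable `x_{ℓ+1}`), as are tableau entries. -/
noncomputable def schur (μ : YoungDiagram) (N : ℕ) (x : ℕ → ℝ) : ℝ :=
  ∑ᶠ T ∈ {T : SemistandardYoungTableau μ | ∀ i j, (i, j) ∈ μ → T i j < N},
    ∏ p ∈ μ.cells, x (T p.1 p.2)

/-- the dual symmetric Grothendieck polynomial `g_μ(x_1, …, x_n)` evaluated at real
arguments; variables are 0-indexed (`x ℓ` is the variable `x_{ℓ+1}`). -/
noncomputable def grothG (μ : YoungDiagram) (n : ℕ) (x : ℕ → ℝ) : ℝ :=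
  ∑ᶠ π ∈ {π : PlanePartition | π.hasShape μ ∧ π.entriesLE n},
    ∏ ℓ ∈ Finset.range n, x ℓ ^ π.cCol (ℓ + 1)

/-- the elementary symmetric polynomial `e_m(x_1, …, x_n)` evaluated at real arguments. -/
noncomputable def esym (n : ℕ) (x : ℕ → ℝ) (m : ℕ) : ℝ :=
  ∑ S ∈ (Finset.range n).powersetCard m, ∏ i ∈ S, x i

/-- `e_m` for an integer index `m`, with `e_m = 0` for `m < 0`. -/
noncomputable def esymZ (n : ℕ) (x : ℕ → ℝ) (m : ℤ) : ℝ :=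
  if 0 ≤ m then esym n x m.toNat else 0

/-- the weight `∏_{(i,j) ∈ Des(π)} q_{π_{ij}}`; the parameters are 0-indexed
(`q ℓ` is the parameter `q_{ℓ+1}`). -/
noncomputable def desWeight (π : PlanePartition) (q : ℕ → ℝ) : ℝ :=
  ∏ᶠ p ∈ π.des, q (π.entry p.1 p.2 - 1)

/-- the probability of a configuration `w` of a `b×c` matrix of i.i.d. Geom(q) entries,
where `P(entry = k) = (1-q) qᵏ`. -/
noncomputable def geomWeight (q : ℝ) (b c : ℕ) (w : Fin b × Fin c → ℕ) : ℝ :=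
  ∏ p : Fin b × Fin c, ((1 - q) * q ^ w p)

/-- extend a `b×c` matrix to an `ℕ × ℕ`-indexed matrix by zero. -/
def matExt {b c : ℕ} (w : Fin b × Fin c → ℕ) : ℕ → ℕ → ℕ :=
  fun i j => if h : i < b ∧ j < c then w (⟨i, h.1⟩, ⟨j, h.2⟩) else 0


/-- for every plane partition `π` with `Φ(π) = (d_{iℓ})` and every `ℓ ≥ 1`,
the number of columns of `π` containing the entry `ℓ` equals the `ℓ`-th column sum of `Φ(π)`. -/
theorem cCol_eq_colsum_phi (π : PlanePartition) (ℓ : ℕ) (hℓ : 1 ≤ ℓ) :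
    π.cCol ℓ = ∑ᶠ i, π.phi i ℓ := by
  classical
  set S : Set (ℕ × ℕ) := {p | π.entry p.1 p.2 = ℓ ∧ π.entry (p.1 + 1) p.2 < ℓ} with hS
  have hSfin : S.Finite := π.finite_support.subset (by
    intro p hp
    simp only [hS, Set.mem_setOf_eq] at hp ⊢
    omega)
  set F : Finset (ℕ × ℕ) := hSfin.toFinset with hF
  have hmemF : ∀ p : ℕ × ℕ, p ∈ F ↔ π.entry p.1 p.2 = ℓ ∧ π.entry (p.1 + 1) p.2 < ℓ := by
    intro p; simp [hF, hS, Set.Finite.mem_toFinset]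
  -- column monotonicity, generalized
  have hcol : ∀ i i' j, i ≤ i' → π.entry i' j ≤ π.entry i j := by
    intro i i' j h
    induction i' with
    | zero => simp_all
    | succ n ih =>
      rcases Nat.lt_or_ge i (n + 1) with h' | h'
      · exact le_trans (π.col_decr n j) (ih (Nat.lt_succ_iff.mp h'))
      · have : i = n + 1 := le_antisymm h h'
        simp [this]
  -- phi i ℓ equals the card of fiber of F over i
  have hphi : ∀ i, π.phi i ℓ = (F.filter (fun p => p.1 = i)).card := by
    intro i
    have himg : ((F.filter (fun p => p.1 = i)).image Prod.snd : Set ℕ)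
        = {j | π.entry i j = ℓ ∧ π.entry (i + 1) j < ℓ} := by
      ext j
      simp only [Finset.coe_image, Set.mem_image, Finset.mem_coe, Finset.mem_filter,
        Set.mem_setOf_eq]
      constructor
      · rintro ⟨⟨i', j'⟩, ⟨hm, hi⟩, hj⟩
        rw [hmemF] at hm
        simp only at hi hj
        subst hi; subst hj; exact hm
      · intro h
        exact ⟨(i, j), ⟨(hmemF (i, j)).2 h, rfl⟩, rfl⟩
    have hinj : Set.InjOn Prod.snd (F.filter (fun p => p.1 = i) : Set (ℕ × ℕ)) := by
      intro p hp q hq hpq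
      simp only [Finset.coe_filter, Set.mem_setOf_eq] at hp hq
      exact Prod.ext (hp.2.trans hq.2.symm) hpq
    have hcard : (F.filter (fun p => p.1 = i)).card
        = ((F.filter (fun p => p.1 = i)).image Prod.snd).card :=
      (Finset.card_image_of_injOn hinj).symm
    unfold PlanePartition.phi
    rw [← himg, Set.ncard_coe_finset, hcard]
  -- sum over i
  have hsum : ∑ᶠ i, π.phi i ℓ = F.card := by
    have hsupp : (Function.support fun i => π.phi i ℓ) ⊆ ↑(F.image Prod.fst) := by
      intro i hi
      simp only [Function.mem_support, hphi i] at hi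
      have : (F.filter (fun p => p.1 = i)).Nonempty := Finset.card_pos.mp (Nat.pos_of_ne_zero hi)
      obtain ⟨p, hp⟩ := this
      simp only [Finset.mem_filter] at hp
      simp only [Finset.coe_image, Set.mem_image, Finset.mem_coe]
      exact ⟨p, hp.1, hp.2⟩
    rw [finsum_eq_finset_sum_of_support_subset _ hsupp]
    rw [Finset.card_eq_sum_card_fiberwise (f := Prod.fst) (t := F.image Prod.fst)
      (fun p hp => Finset.mem_image_of_mem _ hp)]
    exact Finset.sum_congr rfl fun i _ => hphi i
  -- cCol equals F.card via the bijection Prod.snd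
  have hbij : Prod.snd '' S = {j | ∃ i, π.entry i j = ℓ} := by
    ext j
    simp only [Set.mem_image, Set.mem_setOf_eq, hS]
    constructor
    · rintro ⟨⟨i, j'⟩, ⟨h1, _⟩, hj⟩
      simp only at hj
      subst hj; exact ⟨i, h1⟩
    · rintro ⟨i, hi⟩
      -- take the largest i' ≥ i with entry i' j = ℓ
      have hbound : ∀ i', π.entry i' j = ℓ → (i', j) ∈ π.finite_support.toFinset := by
        intro i' h
        simp only [Set.Finite.mem_toFinset, Set.mem_setOf_eq]
        omega
      set T : Finset ℕ := (π.finite_support.toFinset.filter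
        (fun p => π.entry p.1 p.2 = ℓ ∧ p.2 = j)).image Prod.fst with hT
      have hiT : i ∈ T := by
        simp only [hT, Finset.mem_image, Finset.mem_filter]
        exact ⟨(i, j), ⟨hbound i hi, hi, rfl⟩, rfl⟩
      obtain ⟨m0, hmT, hmax⟩ := T.exists_max_image id ⟨i, hiT⟩
      simp only [hT, Finset.mem_image, Finset.mem_filter] at hmT
      obtain ⟨⟨m, j'⟩, ⟨_, hm1, hm2⟩, hm3⟩ := hmT
      simp only at hm1 hm2 hm3
      subst hm3; rw [hm2] at hm1
      have hmℓ : π.entry m j = ℓ := hm1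
      have hnext : π.entry (m + 1) j < ℓ := by
        rcases Nat.lt_or_ge (π.entry (m + 1) j) ℓ with h | h
        · exact h
        · exfalso
          have hle : π.entry (m + 1) j ≤ ℓ := hmℓ ▸ π.col_decr m j
          have heq : π.entry (m + 1) j = ℓ := le_antisymm hle h
          have : m + 1 ∈ T := by
            simp only [hT, Finset.mem_image, Finset.mem_filter]
            exact ⟨(m + 1, j), ⟨hbound _ heq, heq, rfl⟩, rfl⟩
          have h2 := hmax _ this
          simp only [id_eq] at h2
          omega
      exact ⟨(m, j), ⟨hmℓ, hnext⟩, rfl⟩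
  have hinjS : Set.InjOn Prod.snd S := by
    rintro ⟨i, j⟩ hi ⟨i', j'⟩ hi' h
    simp only at h
    subst h
    simp only [hS, Set.mem_setOf_eq] at hi hi'
    rcases Nat.lt_trichotomy i i' with h | h | h
    · exfalso
      have := hcol (i + 1) i' j h
      omega
    · simp [h]
    · exfalso
      have := hcol (i' + 1) i j h
      omega
  have h1 : π.cCol ℓ = S.ncard := by
    unfold PlanePartition.cCol
    rw [← hbij, Set.ncard_image_of_injOn hinjS]
  rw [h1, hsum, hF]
  exact Set.ncard_eq_toFinset_card _ hSfin
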